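/- arXiv:1612.02531 — 2 statements merged into one kernel-verified Lean document; each statement's English description precedes it below -/
import Mathlib

section
/- Let G be a graph with arboricity at most α whose edges are linearly ordered, and let E_α be the set of edges uv such that at most α edges incident to u and at most α edges incident to v appear after uv in the order. Then |E_α| ≤ (α+2)·ν(G), where ν(G) is the maximum matching size. -/
/-- `G` has arboricity at most `α`: the edge set can be partitioned into at
most `α` forests. -/
def ArboricityLE {V : Type*} (G : SimpleGraph V) (α : ℕ) : Prop :=
  ∃ F : Fin α → SimpleGraph V,
    (∀ i, (F i).IsAcyclic) ∧ (∀ i, F i ≤ G) ∧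
    (∀ ⦃u v : V⦄, G.Adj u v → ∃! i, (F i).Adj u v)

/-- Maximum size of a matching of `G` (a set of pairwise vertex-disjoint edges). -/
noncomputable def matchNum {V : Type*} (G : SimpleGraph V) : ℕ :=
  sSup {n : ℕ | ∃ M : Set (Sym2 V), M ⊆ G.edgeSet ∧
    (M.Pairwise fun e f => ∀ v : V, v ∈ e → v ∉ f) ∧ M.ncard = n}

namespace StmtAux

variable {V : Type*}

attribute [local instance] Classical.propDecidable

def IsMatchingF (M : Finset (Sym2 V)) : Prop :=
  (∀ e ∈ M, ¬ e.IsDiag) ∧ ∀ e ∈ M, ∀ f ∈ M, e ≠ f → ∀ v : V, v ∈ e → v ∉ f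

lemma isMatchingF_empty : IsMatchingF (∅ : Finset (Sym2 V)) := by
  constructor <;> simp

lemma IsMatchingF.subset {M N : Finset (Sym2 V)} (h : IsMatchingF N) (hs : M ⊆ N) :
    IsMatchingF M :=
  ⟨fun e he => h.1 e (hs he), fun e he f hf hef v hv => h.2 e (hs he) f (hs hf) hef v hv⟩

lemma sym2_exists_other {e : Sym2 V} (hd : ¬ e.IsDiag) {a : V} (ha : a ∈ e) :
    ∃ b, a ≠ b ∧ e = s(a, b) := by
  induction e using Sym2.ind with
  | _ x y =>
    rw [Sym2.mk_isDiag_iff] at hd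
    rcases Sym2.mem_iff.1 ha with rfl | rfl
    · exact ⟨y, hd, rfl⟩
    · exact ⟨x, fun h => hd h.symm, Sym2.eq_swap⟩

lemma isMatchingF_insert {M : Finset (Sym2 V)} {e : Sym2 V} (hM : IsMatchingF M)
    (hd : ¬ e.IsDiag) (h : ∀ f ∈ M, ∀ v : V, v ∈ e → v ∉ f) :
    IsMatchingF (insert e M) := by
  constructor
  · intro f hf
    rcases Finset.mem_insert.1 hf with rfl | hf
    · exact hd
    · exact hM.1 f hf
  · have h' : ∀ f ∈ M, ∀ v : V, v ∈ f → v ∉ e := fun f hf v hvf hve => h f hf v hve hvf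
    intro f hf g hg hfg v hvf
    rcases Finset.mem_insert.1 hf with rfl | hfM
    · rcases Finset.mem_insert.1 hg with rfl | hgM
      · exact absurd rfl hfg
      · exact h g hgM v hvf
    · rcases Finset.mem_insert.1 hg with rfl | hgM
      · exact h' f hfM v hvf
      · exact hM.2 f hfM g hgM hfg v hvf

/-- The endpoints of a non-diagonal edge, as a 2-element finset. -/
lemma endpoints_card [Fintype V] {e : Sym2 V} (hd : ¬ e.IsDiag) :
    (Finset.univ.filter (· ∈ e)).card = 2 := by
  induction e using Sym2.ind with
  | _ x y =>
    rw [Sym2.mk_isDiag_iff] at hd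
    have : (Finset.univ.filter (· ∈ s(x, y))) = {x, y} := by
      ext z
      simp [Sym2.mem_iff]
    rw [this, Finset.card_insert_of_notMem (by simpa using hd), Finset.card_singleton]

lemma filter_mem_card_eq_two {W : Finset V} {e : Sym2 V} (hd : ¬ e.IsDiag)
    (h : ∀ a ∈ e, a ∈ W) : (W.filter (· ∈ e)).card = 2 := by
  classical
  induction e using Sym2.ind with
  | _ x y =>
    rw [Sym2.mk_isDiag_iff] at hd
    have : (W.filter (· ∈ s(x, y))) = {x, y} := by
      ext z
      simp only [Finset.mem_filter, Sym2.mem_iff, Finset.mem_insert, Finset.mem_singleton]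
      constructor
      · rintro ⟨-, h⟩; exact h
      · rintro (rfl | rfl)
        · exact ⟨h z (by simp), Or.inl rfl⟩
        · exact ⟨h z (by simp), Or.inr rfl⟩
    rw [this, Finset.card_insert_of_notMem (by simpa using hd), Finset.card_singleton]

/-- Handshake lemma: if every endpoint of every edge in `T` lies in `W`,
then the sum of the degrees over `W` is twice the number of edges. -/
lemma handshake {T : Finset (Sym2 V)} {W : Finset V}
    (hnd : ∀ e ∈ T, ¬ e.IsDiag) (h : ∀ e ∈ T, ∀ a ∈ e, a ∈ W) :
    ∑ v ∈ W, (T.filter (fun e => v ∈ e)).card = 2 * T.card := by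
  classical
  have : ∀ v ∈ W, (T.filter (fun e => v ∈ e)).card = ∑ e ∈ T, if v ∈ e then 1 else 0 := by
    intro v _; rw [Finset.card_filter]
  rw [Finset.sum_congr rfl this, Finset.sum_comm]
  have : ∀ e ∈ T, (∑ v ∈ W, if v ∈ e then 1 else 0) = 2 := by
    intro e he
    rw [← Finset.card_filter]
    exact filter_mem_card_eq_two (hnd e he) (h e he)
  rw [Finset.sum_congr rfl this, Finset.sum_const, smul_eq_mul, mul_comm]

/-- Degree bound by the number of available other endpoints. -/
lemma degree_le_card_erase [DecidableEq V] {T : Finset (Sym2 V)} {R : Finset V}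
    (hnd : ∀ e ∈ T, ¬ e.IsDiag) (h : ∀ e ∈ T, ∀ a ∈ e, a ∈ R) (v : V) :
    (T.filter (fun e => v ∈ e)).card ≤ (R.erase v).card := by
  classical
  have hsub : T.filter (fun e => v ∈ e) ⊆ (R.erase v).image (fun w => s(v, w)) := by
    intro e he
    rw [Finset.mem_filter] at he
    obtain ⟨b, hvb, rfl⟩ := sym2_exists_other (hnd e he.1) he.2
    refine Finset.mem_image.2 ⟨b, Finset.mem_erase.2 ⟨fun h' => hvb h'.symm, ?_⟩, rfl⟩
    exact h _ he.1 b (by simp)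
  calc (T.filter (fun e => v ∈ e)).card ≤ ((R.erase v).image (fun w => s(v, w))).card :=
        Finset.card_le_card hsub
    _ ≤ (R.erase v).card := Finset.card_image_le

/-- There exists a maximum matching inside `S`. -/
lemma exists_max_matching (S : Finset (Sym2 V)) :
    ∃ M, M ⊆ S ∧ IsMatchingF M ∧ ∀ P, P ⊆ S → IsMatchingF P → P.card ≤ M.card := by
  classical
  have hne : (S.powerset.filter (fun M => IsMatchingF M)).Nonempty :=
    ⟨∅, by simp [isMatchingF_empty]⟩
  obtain ⟨M, hM, hmax⟩ := Finset.exists_max_image _ Finset.card hne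
  rw [Finset.mem_filter, Finset.mem_powerset] at hM
  exact ⟨M, hM.1, hM.2, fun P hPS hPm =>
    hmax P (by rw [Finset.mem_filter, Finset.mem_powerset]; exact ⟨hPS, hPm⟩)⟩


/-- Core surgery lemma: given a maximum matching `M` covering `z` and another
maximum-size matching `N` exposing `z`, there is a maximum matching `M*`
exposing `z` which exposes every `M`-exposed vertex except possibly one
vertex `y`, which is `N`-covered and `M`-exposed. -/
lemma lemX (S : Finset (Sym2 V)) :
    ∀ (n : ℕ) (M N : Finset (Sym2 V)) (z : V),
      ((M \ N) ∪ (N \ M)).card ≤ n →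
      M ⊆ S → N ⊆ S → IsMatchingF M → IsMatchingF N →
      (∀ P, P ⊆ S → IsMatchingF P → P.card ≤ M.card) →
      N.card = M.card →
      (∃ e ∈ M, z ∈ e) → (∀ f ∈ N, z ∉ f) →
      ∃ Mst : Finset (Sym2 V), ∃ y : V,
        Mst ⊆ M ∪ N ∧ IsMatchingF Mst ∧ Mst.card = M.card ∧
        (∀ f ∈ Mst, z ∉ f) ∧
        (∃ f ∈ N, y ∈ f) ∧ (∀ f ∈ M, y ∉ f) ∧
        (∀ x : V, (∀ f ∈ M, x ∉ f) → x ≠ y → (∀ f ∈ Mst, x ∉ f)) ∧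
        (∀ x : V, (∀ f ∈ Mst, x ∉ f) → (∀ f ∈ M, x ∉ f) ∨ x = z) := by
  intro n
  induction n with
  | zero =>
    intro M N z hcard _ _ _ _ _ _ hzM hzN
    obtain ⟨e₁, he₁M, hze₁⟩ := hzM
    have he₁N : e₁ ∉ N := fun h => hzN e₁ h hze₁
    have : e₁ ∈ (M \ N) ∪ (N \ M) := Finset.mem_union_left _ (Finset.mem_sdiff.2 ⟨he₁M, he₁N⟩)
    have := Finset.card_pos.2 ⟨e₁, this⟩
    omega
  | succ n IH =>
    intro M N z hcard hMS hNS hM hN hMax hNcard hzM hzN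
    obtain ⟨e₁, he₁M, hze₁⟩ := hzM
    have he₁N : e₁ ∉ N := fun h => hzN e₁ h hze₁
    obtain ⟨z₁, hzz₁, he₁⟩ := sym2_exists_other (hM.1 e₁ he₁M) hze₁
    have hz₁e₁ : z₁ ∈ e₁ := by rw [he₁]; simp
    -- z₁ is covered by N
    have hz₁N : ∃ f ∈ N, z₁ ∈ f := by
      by_contra hcon
      push_neg at hcon
      have hmm : IsMatchingF (insert e₁ N) := by
        refine isMatchingF_insert hN (hM.1 e₁ he₁M) ?_
        intro f hf v hv
        rw [he₁, Sym2.mem_iff] at hv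
        rcases hv with rfl | rfl
        · exact hzN f hf
        · exact hcon f hf
      have hsub : insert e₁ N ⊆ S := by
        intro f hf
        rcases Finset.mem_insert.1 hf with rfl | hf
        · exact hMS he₁M
        · exact hNS hf
      have := hMax _ hsub hmm
      rw [Finset.card_insert_of_notMem he₁N] at this
      omega
    obtain ⟨e₂, he₂N, hz₁e₂⟩ := hz₁N
    obtain ⟨w₂, hz₁w₂, he₂⟩ := sym2_exists_other (hN.1 e₂ he₂N) hz₁e₂
    have hw₂e₂ : w₂ ∈ e₂ := by rw [he₂]; simp
    have hwz : w₂ ≠ z := by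
      rintro rfl
      exact hzN e₂ he₂N hw₂e₂
    have hze₂ : z ∉ e₂ := hzN e₂ he₂N
    have he₁₂ : e₁ ≠ e₂ := fun h => hze₂ (h ▸ hze₁)
    have he₂M : e₂ ∉ M := fun h =>
      hM.2 e₂ h e₁ he₁M (Ne.symm he₁₂) z₁ hz₁e₂ hz₁e₁
    by_cases hw₂cov : ∃ f ∈ M, w₂ ∈ f
    · -- recursive case : w₂ covered by M
      set N' := insert e₁ (N.erase e₂) with hN'def
      have he₁Ne : e₁ ∉ N.erase e₂ := fun h => he₁N (Finset.mem_of_mem_erase h)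
      have hN'm : IsMatchingF N' := by
        refine isMatchingF_insert (hN.subset (Finset.erase_subset _ _)) (hM.1 e₁ he₁M) ?_
        intro f hf v hv
        rw [he₁, Sym2.mem_iff] at hv
        have hfN : f ∈ N := Finset.mem_of_mem_erase hf
        rcases hv with rfl | hv2
        · exact hzN f hfN
        · intro hvf
          exact hN.2 f hfN e₂ he₂N (Finset.ne_of_mem_erase hf) v hvf
            (by rw [hv2]; exact hz₁e₂)
      have hN'S : N' ⊆ S := by
        intro f hf
        rcases Finset.mem_insert.1 hf with rfl | hf
        · exact hMS he₁M
        · exact hNS (Finset.mem_of_mem_erase hf)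
      have hN'card : N'.card = M.card := by
        rw [hN'def, Finset.card_insert_of_notMem he₁Ne, Finset.card_erase_of_mem he₂N]
        have : 1 ≤ N.card := Finset.card_pos.2 ⟨e₂, he₂N⟩
        omega
      have hw₂N' : ∀ f ∈ N', w₂ ∉ f := by
        intro f hf hw₂f
        rcases Finset.mem_insert.1 hf with rfl | hf
        · rw [he₁, Sym2.mem_iff] at hw₂f
          rcases hw₂f with h | h
          · exact hwz h
          · exact hz₁w₂ h.symm
        · exact hN.2 f (Finset.mem_of_mem_erase hf) e₂ he₂N (Finset.ne_of_mem_erase hf)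
            w₂ hw₂f hw₂e₂
      have hmeas : ((M \ N') ∪ (N' \ M)).card ≤ n := by
        have hsub : (M \ N') ∪ (N' \ M) ⊆ ((M \ N) ∪ (N \ M)).erase e₁ := by
          intro f hf
          rw [Finset.mem_erase]
          rcases Finset.mem_union.1 hf with hf | hf
          · rw [Finset.mem_sdiff] at hf
            obtain ⟨hfM, hfN'⟩ := hf
            have hfe₁ : f ≠ e₁ := by rintro rfl; exact hfN' (Finset.mem_insert_self _ _)
            have hfN : f ∉ N := by
              intro h
              have hfe₂ : f ≠ e₂ := by rintro rfl; exact he₂M hfM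
              exact hfN' (Finset.mem_insert_of_mem (Finset.mem_erase.2 ⟨hfe₂, h⟩))
            exact ⟨hfe₁, Finset.mem_union_left _ (Finset.mem_sdiff.2 ⟨hfM, hfN⟩)⟩
          · rw [Finset.mem_sdiff] at hf
            obtain ⟨hfN', hfM⟩ := hf
            rcases Finset.mem_insert.1 hfN' with rfl | hf2
            · exact absurd he₁M hfM
            · have hfN := Finset.mem_of_mem_erase hf2
              exact ⟨fun h => he₁N (h ▸ hfN), Finset.mem_union_right _
                (Finset.mem_sdiff.2 ⟨hfN, hfM⟩)⟩
        have he₁mem : e₁ ∈ (M \ N) ∪ (N \ M) :=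
          Finset.mem_union_left _ (Finset.mem_sdiff.2 ⟨he₁M, he₁N⟩)
        have hcc := Finset.card_le_card hsub
        rw [Finset.card_erase_of_mem he₁mem] at hcc
        omega
      obtain ⟨M₁, y₁, hMst1, hMst2, hMst3, hMst4, hMst5, hMst6, hMst7, hMst8⟩ :=
        IH M N' w₂ hmeas hMS hN'S hM hN'm hMax hN'card hw₂cov hw₂N'
      have hzonly : ∀ f, f ∈ M ∪ N' → z ∈ f → f = e₁ := by
        intro f hf hzf
        rcases Finset.mem_union.1 hf with hf | hf
        · by_contra hne; exact hM.2 f hf e₁ he₁M (fun h => hne h) z hzf hze₁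
        · rcases Finset.mem_insert.1 hf with h | hf2
          · exact h
          · exact absurd hzf (hzN f (Finset.mem_of_mem_erase hf2))
      have he₁M₁ : e₁ ∈ M₁ := by
        by_contra hcon
        have hzexp : ∀ f ∈ M₁, z ∉ f := by
          intro f hf hzf
          have hfe := hzonly f (hMst1 hf) hzf
          exact hcon (hfe ▸ hf)
        rcases hMst8 z hzexp with h | h
        · exact h e₁ he₁M hze₁
        · exact hwz h.symm
      have he₂M₁ : e₂ ∉ M₁ := by
        intro h
        rcases Finset.mem_union.1 (hMst1 h) with h' | h'
        · exact he₂M h'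
        · rcases Finset.mem_insert.1 h' with h'' | h''
          · exact he₁₂ h''.symm
          · exact (Finset.notMem_erase e₂ N) h''
      have hz₁free : ∀ f ∈ M₁.erase e₁, z₁ ∉ f := by
        intro f hf hz₁f
        have hfe₁ : f ≠ e₁ := Finset.ne_of_mem_erase hf
        have hfM₁ : f ∈ M₁ := Finset.mem_of_mem_erase hf
        rcases Finset.mem_union.1 (hMst1 hfM₁) with h' | h'
        · exact hM.2 f h' e₁ he₁M hfe₁ z₁ hz₁f hz₁e₁
        · rcases Finset.mem_insert.1 h' with h'' | h''
          · exact hfe₁ h''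
          · exact hN.2 f (Finset.mem_of_mem_erase h'') e₂ he₂N (Finset.ne_of_mem_erase h'')
              z₁ hz₁f hz₁e₂
      have hzfree' : ∀ f ∈ M₁.erase e₁, z ∉ f := by
        intro f hf hzf
        exact (Finset.ne_of_mem_erase hf) (hzonly f (hMst1 (Finset.mem_of_mem_erase hf)) hzf)
      refine ⟨insert e₂ (M₁.erase e₁), y₁, ?_, ?_, ?_, ?_, ?_, ?_, ?_, ?_⟩
      · intro f hf
        rcases Finset.mem_insert.1 hf with rfl | hf
        · exact Finset.mem_union_right _ he₂N
        · rcases Finset.mem_union.1 (hMst1 (Finset.mem_of_mem_erase hf)) with h | h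
          · exact Finset.mem_union_left _ h
          · rcases Finset.mem_insert.1 h with rfl | h
            · exact Finset.mem_union_left _ he₁M
            · exact Finset.mem_union_right _ (Finset.mem_of_mem_erase h)
      · refine isMatchingF_insert (hMst2.subset (Finset.erase_subset _ _)) (hN.1 e₂ he₂N) ?_
        intro f hf v hv hvf
        rw [he₂, Sym2.mem_iff] at hv
        rcases hv with hv2 | hv2
        · exact hz₁free f hf (hv2 ▸ hvf)
        · exact hMst4 f (Finset.mem_of_mem_erase hf) (hv2 ▸ hvf)
      · rw [Finset.card_insert_of_notMem (fun h => he₂M₁ (Finset.mem_of_mem_erase h)),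
          Finset.card_erase_of_mem he₁M₁]
        have : 1 ≤ M₁.card := Finset.card_pos.2 ⟨e₁, he₁M₁⟩
        omega
      · intro f hf hzf
        rcases Finset.mem_insert.1 hf with rfl | hf
        · exact hze₂ hzf
        · exact hzfree' f hf hzf
      · obtain ⟨g, hgN', hy₁g⟩ := hMst5
        rcases Finset.mem_insert.1 hgN' with rfl | hg
        · exact absurd hy₁g (hMst6 g he₁M)
        · exact ⟨g, Finset.mem_of_mem_erase hg, hy₁g⟩
      · exact hMst6
      · intro x hxM hxy f hf hxf
        rcases Finset.mem_insert.1 hf with rfl | hf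
        · rw [he₂, Sym2.mem_iff] at hxf
          rcases hxf with h | h
          · exact hxM e₁ he₁M (by rw [h]; exact hz₁e₁)
          · obtain ⟨g, hg, hw₂g⟩ := hw₂cov
            exact hxM g hg (by rw [h]; exact hw₂g)
        · exact hMst7 x hxM hxy f (Finset.mem_of_mem_erase hf) hxf
      · intro x hxfree
        by_cases hxM₁ : ∀ f ∈ M₁, x ∉ f
        · rcases hMst8 x hxM₁ with h | h
          · exact Or.inl h
          · exact absurd (by rw [h]; exact hw₂e₂)
              (hxfree e₂ (Finset.mem_insert_self _ _))
        · push_neg at hxM₁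
          obtain ⟨g, hgM₁, hxg⟩ := hxM₁
          by_cases hge₁ : g = e₁
          · rw [hge₁, he₁, Sym2.mem_iff] at hxg
            rcases hxg with h | h
            · exact Or.inr h
            · exact absurd (by rw [h]; exact hz₁e₂)
                (hxfree e₂ (Finset.mem_insert_self _ _))
          · exact absurd hxg (hxfree g
              (Finset.mem_insert_of_mem (Finset.mem_erase.2 ⟨hge₁, hgM₁⟩)))
    · -- base case : w₂ exposed in M
      push_neg at hw₂cov
      have he₂Me : e₂ ∉ M.erase e₁ := fun h => he₂M (Finset.mem_of_mem_erase h)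
      refine ⟨insert e₂ (M.erase e₁), w₂, ?_, ?_, ?_, ?_, ?_, ?_, ?_, ?_⟩
      · intro f hf
        rcases Finset.mem_insert.1 hf with rfl | hf
        · exact Finset.mem_union_right _ he₂N
        · exact Finset.mem_union_left _ (Finset.mem_of_mem_erase hf)
      · refine isMatchingF_insert (hM.subset (Finset.erase_subset _ _)) (hN.1 e₂ he₂N) ?_
        intro f hf v hv hvf
        rw [he₂, Sym2.mem_iff] at hv
        have hfM : f ∈ M := Finset.mem_of_mem_erase hf
        rcases hv with hv2 | hv2
        · exact hM.2 f hfM e₁ he₁M (Finset.ne_of_mem_erase hf) z₁ (hv2 ▸ hvf) hz₁e₁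
        · exact hw₂cov f hfM (hv2 ▸ hvf)
      · rw [Finset.card_insert_of_notMem he₂Me, Finset.card_erase_of_mem he₁M]
        have : 1 ≤ M.card := Finset.card_pos.2 ⟨e₁, he₁M⟩
        omega
      · intro f hf hzf
        rcases Finset.mem_insert.1 hf with rfl | hf
        · exact hze₂ hzf
        · exact hM.2 f (Finset.mem_of_mem_erase hf) e₁ he₁M (Finset.ne_of_mem_erase hf)
            z hzf hze₁
      · exact ⟨e₂, he₂N, hw₂e₂⟩
      · exact hw₂cov
      · intro x hxM hxy f hf hxf
        rcases Finset.mem_insert.1 hf with rfl | hf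
        · rw [he₂, Sym2.mem_iff] at hxf
          rcases hxf with h | h
          · exact hxM e₁ he₁M (by rw [h]; exact hz₁e₁)
          · exact hxy h
        · exact hxM f (Finset.mem_of_mem_erase hf) hxf
      · intro x hxfree
        by_cases hxM : ∀ f ∈ M, x ∉ f
        · exact Or.inl hxM
        · push_neg at hxM
          obtain ⟨g, hgM, hxg⟩ := hxM
          by_cases hge₁ : g = e₁
          · rw [hge₁, he₁, Sym2.mem_iff] at hxg
            rcases hxg with h | h
            · exact Or.inr h
            · exact absurd (by rw [h]; exact hz₁e₂)
                (hxfree e₂ (Finset.mem_insert_self _ _))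
          · exact absurd hxg (hxfree g
              (Finset.mem_insert_of_mem (Finset.mem_erase.2 ⟨hge₁, hgM⟩)))



/-- If every vertex can be exposed by some maximum matching, then no two
distinct vertices exposed by a maximum matching are connected. -/
lemma lemGallai (S : Finset (Sym2 V)) (hnd : ∀ e ∈ S, ¬ e.IsDiag)
    (hin : ∀ v : V, ∃ N, N ⊆ S ∧ IsMatchingF N ∧
      (∀ P, P ⊆ S → IsMatchingF P → P.card ≤ N.card) ∧ (∀ f ∈ N, v ∉ f)) :
    ∀ u w : V, Relation.ReflTransGen (fun a b => s(a, b) ∈ S) u w → u ≠ w →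
      ∀ M, M ⊆ S → IsMatchingF M →
      (∀ P, P ⊆ S → IsMatchingF P → P.card ≤ M.card) →
      (∀ f ∈ M, u ∉ f) → (∀ f ∈ M, w ∉ f) → False := by
  intro u w hreach
  induction hreach using Relation.ReflTransGen.head_induction_on with
  | refl =>
    intro hneq
    exact absurd rfl hneq
  | @head a c h' hrest ih =>
    intro hneq M hMS hM hMax haexp hwexp
    have hndac : ¬ (s(a, c)).IsDiag := hnd _ h'
    have hac : a ≠ c := fun h => hndac (Sym2.mk_isDiag_iff.2 h)
    by_cases hcexp : ∀ f ∈ M, c ∉ f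
    · have hmm : IsMatchingF (insert s(a, c) M) := by
        refine isMatchingF_insert hM hndac ?_
        intro f hf v hv hvf
        rcases Sym2.mem_iff.1 hv with hv2 | hv2
        · exact haexp f hf (hv2 ▸ hvf)
        · exact hcexp f hf (hv2 ▸ hvf)
      have hsub : insert s(a, c) M ⊆ S := by
        intro f hf
        rcases Finset.mem_insert.1 hf with rfl | hf
        · exact h'
        · exact hMS hf
      have hle := hMax _ hsub hmm
      have hnm : s(a, c) ∉ M := fun h => haexp _ h (by simp)
      rw [Finset.card_insert_of_notMem hnm] at hle
      omega
    · push_neg at hcexp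
      obtain ⟨N, hNS, hNm, hNmax, hNexp⟩ := hin c
      have hNcard : N.card = M.card := le_antisymm (hMax N hNS hNm) (hNmax M hMS hM)
      obtain ⟨Mst, y, h1, h2, h3, h4, h5, h6, h7, h8⟩ :=
        lemX S (((M \ N) ∪ (N \ M)).card) M N c le_rfl hMS hNS hM hNm hMax hNcard hcexp hNexp
      have hMstS : Mst ⊆ S := fun f hf =>
        (Finset.mem_union.1 (h1 hf)).elim (fun h => hMS h) (fun h => hNS h)
      have hMstMax : ∀ P, P ⊆ S → IsMatchingF P → P.card ≤ Mst.card := by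
        intro P hP hPm
        rw [h3]
        exact hMax P hP hPm
      by_cases hya : y = a
      · have hcw : c ≠ w := by
          intro h
          obtain ⟨f, hf, hcf⟩ := hcexp
          exact hwexp f hf (h ▸ hcf)
        have hwy : w ≠ y := fun h => hneq (by rw [h, hya])
        exact ih hcw Mst hMstS h2 hMstMax h4 (h7 w hwexp hwy)
      · have haMst : ∀ f ∈ Mst, a ∉ f := h7 a haexp (fun h => hya h.symm)
        have hmm : IsMatchingF (insert s(a, c) Mst) := by
          refine isMatchingF_insert h2 hndac ?_
          intro f hf v hv hvf
          rcases Sym2.mem_iff.1 hv with hv2 | hv2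
          · exact haMst f hf (hv2 ▸ hvf)
          · exact h4 f hf (hv2 ▸ hvf)
        have hsub : insert s(a, c) Mst ⊆ S := by
          intro f hf
          rcases Finset.mem_insert.1 hf with rfl | hf
          · exact h'
          · exact hMstS hf
        have hle := hMax _ hsub hmm
        have hnm : s(a, c) ∉ Mst := fun h => h4 _ h (by simp)
        rw [Finset.card_insert_of_notMem hnm, h3] at hle
        omega


lemma sym2_nonempty (e : Sym2 V) : ∃ a, a ∈ e := by
  induction e using Sym2.ind with
  | _ x y => exact ⟨x, by simp⟩

lemma endpoints_card' [Fintype V] {e : Sym2 V} (hd : ¬ e.IsDiag) :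
    (Finset.univ.filter (· ∈ e)).card = 2 := by
  induction e using Sym2.ind with
  | _ x y =>
    rw [Sym2.mk_isDiag_iff] at hd
    have : (Finset.univ.filter (· ∈ s(x, y))) = {x, y} := by
      ext z
      simp [Sym2.mem_iff]
    rw [this, Finset.card_insert_of_notMem (by simpa using hd), Finset.card_singleton]

/-- Main counting theorem: a finite multigraph-free edge set with maximum degree
at most `D` has a matching `M` with `|S| ≤ (D+1)|M|`. -/
theorem main_bound [Fintype V] (D : ℕ) :
    ∀ (n : ℕ) (S : Finset (Sym2 V)), S.card ≤ n →
      (∀ e ∈ S, ¬ e.IsDiag) →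
      (∀ v : V, (S.filter (fun e => v ∈ e)).card ≤ D) →
      ∃ M, M ⊆ S ∧ IsMatchingF M ∧ S.card ≤ (D + 1) * M.card := by
  intro n
  induction n with
  | zero =>
    intro S hS _ _
    exact ⟨∅, Finset.empty_subset _, isMatchingF_empty, by omega⟩
  | succ n IH =>
    intro S hSn hnd hdeg
    by_cases hin : ∀ v : V, ∃ N, N ⊆ S ∧ IsMatchingF N ∧
        (∀ P, P ⊆ S → IsMatchingF P → P.card ≤ N.card) ∧ (∀ f ∈ N, v ∉ f)
    · -- every vertex avoidable
      obtain ⟨M₀, hM₀S, hM₀m, hM₀max⟩ := exists_max_matching S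
      by_cases hallcov : ∀ e ∈ S, ∀ a ∈ e, ∃ f ∈ M₀, a ∈ f
      · -- all endpoints covered by M₀ : easy count
        set W := M₀.biUnion (fun e => Finset.univ.filter (· ∈ e)) with hWdef
        have hWcard : W.card ≤ 2 * M₀.card := by
          calc W.card ≤ ∑ e ∈ M₀, (Finset.univ.filter (· ∈ e)).card :=
                Finset.card_biUnion_le
            _ = ∑ e ∈ M₀, 2 := Finset.sum_congr rfl
                (fun e he => endpoints_card' (hM₀m.1 e he))
            _ = 2 * M₀.card := by rw [Finset.sum_const, smul_eq_mul, mul_comm]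
        have hend : ∀ e ∈ S, ∀ a ∈ e, a ∈ W := by
          intro e he a ha
          obtain ⟨f, hf, haf⟩ := hallcov e he a ha
          exact Finset.mem_biUnion.2 ⟨f, hf, Finset.mem_filter.2 ⟨Finset.mem_univ _, haf⟩⟩
        have hhs := handshake hnd hend
        have hsum : ∑ v ∈ W, (S.filter (fun e => v ∈ e)).card ≤ W.card * D := by
          calc ∑ v ∈ W, (S.filter (fun e => v ∈ e)).card ≤ ∑ _v ∈ W, D :=
                Finset.sum_le_sum (fun v _ => hdeg v)
            _ = W.card * D := by rw [Finset.sum_const, smul_eq_mul]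
        refine ⟨M₀, hM₀S, hM₀m, ?_⟩
        have h2 : 2 * S.card ≤ 2 * M₀.card * D := by
          rw [← hhs]
          exact le_trans hsum (Nat.mul_le_mul_right D hWcard)
        nlinarith
      · -- peel off the connected territory of an exposed vertex
        push_neg at hallcov
        obtain ⟨e₀, he₀S, u, hue₀, -⟩ := hallcov
        obtain ⟨M, hMS, hMm, hMmax, hMuexp⟩ := hin u
        set r : V → V → Prop := fun a b => s(a, b) ∈ S with hrdef
        set R : Finset V := Finset.univ.filter (fun x => Relation.ReflTransGen r u x) with hRdef
        have huR : u ∈ R := Finset.mem_filter.2 ⟨Finset.mem_univ _, Relation.ReflTransGen.refl⟩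
        have hclosure : ∀ e ∈ S, ∀ a ∈ e, a ∈ R → ∀ b ∈ e, b ∈ R := by
          intro e heS a hae haR b hbe
          obtain ⟨c, hac, hec⟩ := sym2_exists_other (hnd e heS) hae
          have hrac : r a c := by rw [hrdef]; rw [hec] at heS; exact heS
          have hcR : c ∈ R := by
            rw [hRdef, Finset.mem_filter]
            exact ⟨Finset.mem_univ _, Relation.ReflTransGen.tail
              ((Finset.mem_filter.1 haR).2) hrac⟩
          rw [hec, Sym2.mem_iff] at hbe
          rcases hbe with rfl | rfl
          · exact haR
          · exact hcR
        set S₁ := S.filter (fun e => ∀ a ∈ e, a ∈ R) with hS₁def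
        set S₂ := S.filter (fun e => ¬ ∀ a ∈ e, a ∈ R) with hS₂def
        have hS₂R : ∀ e ∈ S₂, ∀ a ∈ e, a ∉ R := by
          intro e he a hae haR
          exact (Finset.mem_filter.1 he).2
            (hclosure e (Finset.mem_filter.1 he).1 a hae haR)
        have he₀S₁ : e₀ ∈ S₁ :=
          Finset.mem_filter.2 ⟨he₀S, hclosure e₀ he₀S u hue₀ huR⟩
        have hsplit : S₁.card + S₂.card = S.card :=
          Finset.card_filter_add_card_filter_not _
        set M₁ := M.filter (fun e => ∀ a ∈ e, a ∈ R) with hM₁def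
        have hM₁M : M₁ ⊆ M := Finset.filter_subset _ _
        have hcov : ∀ x ∈ R, x ≠ u → ∃ f ∈ M₁, x ∈ f := by
          intro x hxR hxu
          by_contra hcon
          push_neg at hcon
          have hxexp : ∀ f ∈ M, x ∉ f := by
            intro f hf hxf
            exact hcon f (Finset.mem_filter.2 ⟨hf, hclosure f (hMS hf) x hxf hxR⟩) hxf
          exact lemGallai S hnd hin u x ((Finset.mem_filter.1 hxR).2) (Ne.symm hxu)
            M hMS hMm hMmax hMuexp hxexp
        have hu_nmem : u ∉ M₁.biUnion (fun e => Finset.univ.filter (· ∈ e)) := by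
          intro h
          obtain ⟨f, hf, huf⟩ := Finset.mem_biUnion.1 h
          exact hMuexp f (hM₁M hf) (Finset.mem_filter.1 huf).2
        have hR : R = insert u (M₁.biUnion (fun e => Finset.univ.filter (· ∈ e))) := by
          ext x
          constructor
          · intro hxR
            by_cases hxu : x = u
            · exact Finset.mem_insert.2 (Or.inl hxu)
            · obtain ⟨f, hf, hxf⟩ := hcov x hxR hxu
              exact Finset.mem_insert.2 (Or.inr (Finset.mem_biUnion.2
                ⟨f, hf, Finset.mem_filter.2 ⟨Finset.mem_univ _, hxf⟩⟩))
          · intro hx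
            rcases Finset.mem_insert.1 hx with rfl | hx
            · exact huR
            · obtain ⟨f, hf, hxf⟩ := Finset.mem_biUnion.1 hx
              exact (Finset.mem_filter.1 hf).2 x (Finset.mem_filter.1 hxf).2
        set k₁ := M₁.card with hk₁def
        have hRcard : R.card = 2 * k₁ + 1 := by
          rw [hR, Finset.card_insert_of_notMem hu_nmem, Finset.card_biUnion]
          · rw [Finset.sum_congr rfl (fun e he => endpoints_card' (hMm.1 e (hM₁M he)))]
            rw [Finset.sum_const, smul_eq_mul, mul_comm]
          · intro e he f hf hef
            rw [Function.onFun, Finset.disjoint_left]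
            intro x hxe hxf
            exact hMm.2 e (hM₁M he) f (hM₁M hf) hef x
              (Finset.mem_filter.1 hxe).2 (Finset.mem_filter.1 hxf).2
        have hS₁nd : ∀ e ∈ S₁, ¬ e.IsDiag := fun e he => hnd e (Finset.mem_filter.1 he).1
        have hS₁end : ∀ e ∈ S₁, ∀ a ∈ e, a ∈ R := fun e he => (Finset.mem_filter.1 he).2
        have hhs := handshake hS₁nd hS₁end
        have hS₁bound : S₁.card ≤ (D + 1) * k₁ := by
          by_cases hDk : D ≤ 2 * k₁
          · have hsum : ∑ v ∈ R, (S₁.filter (fun e => v ∈ e)).card ≤ R.card * D := by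
              calc ∑ v ∈ R, (S₁.filter (fun e => v ∈ e)).card ≤ ∑ _v ∈ R, D :=
                    Finset.sum_le_sum (fun v _ => le_trans
                      (Finset.card_le_card (Finset.filter_subset_filter _
                        (Finset.filter_subset _ _))) (hdeg v))
                _ = R.card * D := by rw [Finset.sum_const, smul_eq_mul]
            rw [hhs, hRcard] at hsum
            nlinarith
          · have hDk' : 2 * k₁ + 1 ≤ D := by omega
            have hsum : ∑ v ∈ R, (S₁.filter (fun e => v ∈ e)).card ≤ R.card * (2 * k₁) := by
              calc ∑ v ∈ R, (S₁.filter (fun e => v ∈ e)).card ≤ ∑ v ∈ R, (2 * k₁) := by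
                    refine Finset.sum_le_sum (fun v hv => ?_)
                    have hle := degree_le_card_erase hS₁nd hS₁end v
                    rw [Finset.card_erase_of_mem hv, hRcard] at hle
                    omega
                _ = R.card * (2 * k₁) := by rw [Finset.sum_const, smul_eq_mul]
            rw [hhs, hRcard] at hsum
            nlinarith
        have hS₂n : S₂.card ≤ n := by
          have h1 : 1 ≤ S₁.card := Finset.card_pos.2 ⟨e₀, he₀S₁⟩
          omega
        obtain ⟨M₂', hM₂'S₂, hM₂'m, hM₂'bound⟩ := IH S₂ hS₂n
          (fun e he => hnd e (Finset.mem_filter.1 he).1)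
          (fun v => le_trans (Finset.card_le_card (Finset.filter_subset_filter _
            (Finset.filter_subset _ _))) (hdeg v))
        have hM₁m : IsMatchingF M₁ := hMm.subset hM₁M
        have hdisjMM : ∀ e ∈ M₁, ∀ f ∈ M₂', ∀ v : V, v ∈ e → v ∉ f := by
          intro e he f hf v hve hvf
          exact hS₂R f (hM₂'S₂ hf) v hvf ((Finset.mem_filter.1 he).2 v hve)
        have hunionm : IsMatchingF (M₁ ∪ M₂') := by
          constructor
          · intro e he
            rcases Finset.mem_union.1 he with he | he
            · exact hM₁m.1 e he
            · exact hM₂'m.1 e he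
          · intro e he f hf hef v hve
            rcases Finset.mem_union.1 he with he | he <;>
              rcases Finset.mem_union.1 hf with hf | hf
            · exact hM₁m.2 e he f hf hef v hve
            · exact hdisjMM e he f hf v hve
            · exact fun hvf => hdisjMM f hf e he v hvf hve
            · exact hM₂'m.2 e he f hf hef v hve
        have hdisj : Disjoint M₁ M₂' := by
          rw [Finset.disjoint_left]
          intro e he hf
          obtain ⟨a, ha⟩ := sym2_nonempty e
          exact hS₂R e (hM₂'S₂ hf) a ha ((Finset.mem_filter.1 he).2 a ha)
        refine ⟨M₁ ∪ M₂', ?_, hunionm, ?_⟩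
        · intro e he
          rcases Finset.mem_union.1 he with he | he
          · exact hMS (hM₁M he)
          · exact (Finset.filter_subset _ _) (hM₂'S₂ he)
        · rw [Finset.card_union_of_disjoint hdisj]
          calc S.card = S₁.card + S₂.card := hsplit.symm
            _ ≤ (D + 1) * k₁ + (D + 1) * M₂'.card := Nat.add_le_add hS₁bound hM₂'bound
            _ = (D + 1) * (k₁ + M₂'.card) := by ring
    · -- there is an essential vertex
      push_neg at hin
      obtain ⟨v, hv⟩ := hin
      obtain ⟨M, hMS, hMm, hMax⟩ := exists_max_matching S
      set S' := S.filter (fun e => ¬ v ∈ e) with hS'def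
      set dv := (S.filter (fun e => v ∈ e)).card with hdvdef
      have hsplit : dv + S'.card = S.card :=
        Finset.card_filter_add_card_filter_not _
      have hdv1 : 1 ≤ dv := by
        by_contra h
        have hdv0 : dv = 0 := by omega
        have hvexp : ∀ f ∈ M, v ∉ f := by
          intro f hf hvf
          have : f ∈ S.filter (fun e => v ∈ e) := Finset.mem_filter.2 ⟨hMS hf, hvf⟩
          have := Finset.card_pos.2 ⟨f, this⟩
          omega
        obtain ⟨f, hf, hvf⟩ := hv M hMS hMm hMax
        exact hvexp f hf hvf
      have hS'n : S'.card ≤ n := by omega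
      obtain ⟨M', hM'S', hM'm, hM'bound⟩ := IH S' hS'n
        (fun e he => hnd e (Finset.mem_filter.1 he).1)
        (fun w => le_trans (Finset.card_le_card (Finset.filter_subset_filter _
          (Finset.filter_subset _ _))) (hdeg w))
      have hM'c : M'.card + 1 ≤ M.card := by
        by_contra hcon
        push_neg at hcon
        have hM'max : ∀ P, P ⊆ S → IsMatchingF P → P.card ≤ M'.card := by
          intro P hP hPm
          have := hMax P hP hPm
          omega
        obtain ⟨f, hf, hvf⟩ := hv M' (le_trans hM'S' (Finset.filter_subset _ _)) hM'm hM'max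
        exact (Finset.mem_filter.1 (hM'S' hf)).2 hvf
      refine ⟨M, hMS, hMm, ?_⟩
      have hdvD : dv ≤ D := hdeg v
      have h1 : (D + 1) * (M'.card + 1) ≤ (D + 1) * M.card :=
        Nat.mul_le_mul_left _ hM'c
      nlinarith

end StmtAux

/-- Let `G` have arboricity at most `α` with edges linearly ordered by arrival
times `t` (distinct on edges), and let `E_α` be the set of edges `e` such that
for each endpoint `u` of `e` at most `α` edges incident to `u` arrive after
`e`.  Then `|E_α| ≤ (α+2)·ν(G)`. -/
theorem stmt_3 {V : Type*} [Fintype V] (G : SimpleGraph V) (α : ℕ)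
    (hG : ArboricityLE G α)
    (t : Sym2 V → ℕ) (ht : Set.InjOn t G.edgeSet) :
    {e ∈ G.edgeSet |
        ∀ u ∈ e, {e' ∈ G.edgeSet | u ∈ e' ∧ t e < t e'}.ncard ≤ α}.ncard ≤
      (α + 2) * matchNum G := by
  classical
  set Eset : Set (Sym2 V) := {e ∈ G.edgeSet |
      ∀ u ∈ e, {e' ∈ G.edgeSet | u ∈ e' ∧ t e < t e'}.ncard ≤ α} with hEdef
  have hfin : Eset.Finite := Set.toFinite _
  set S : Finset (Sym2 V) := hfin.toFinset with hSdef
  have hSE : ∀ e ∈ S, e ∈ Eset := fun e he => hfin.mem_toFinset.1 he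
  have hSedge : ∀ e ∈ S, e ∈ G.edgeSet := fun e he => (hSE e he).1
  have hSnd : ∀ e ∈ S, ¬ e.IsDiag := fun e he =>
    G.not_isDiag_of_mem_edgeSet (hSedge e he)
  have hdeg : ∀ v : V, (S.filter (fun e => v ∈ e)).card ≤ α + 1 := by
    intro v
    by_contra hcon
    push_neg at hcon
    set A := S.filter (fun e => v ∈ e) with hAdef
    have hAne : A.Nonempty := Finset.card_pos.1 (by omega)
    obtain ⟨e, heA, hmin⟩ := Finset.exists_min_image A t hAne
    have heS : e ∈ S := (Finset.mem_filter.1 heA).1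
    have hve : v ∈ e := (Finset.mem_filter.1 heA).2
    have hprop := (hSE e heS).2 v hve
    have hsub : ↑(A.erase e) ⊆ {e' ∈ G.edgeSet | v ∈ e' ∧ t e < t e'} := by
      intro f hf
      simp only [Finset.coe_erase, Set.mem_diff, Finset.mem_coe, Set.mem_singleton_iff] at hf
      obtain ⟨hfA, hfe⟩ := hf
      have hfS : f ∈ S := (Finset.mem_filter.1 hfA).1
      have hvf : v ∈ f := (Finset.mem_filter.1 hfA).2
      refine ⟨hSedge f hfS, hvf, ?_⟩
      have hle := hmin f hfA
      have hne : t e ≠ t f := fun h => hfe (ht (hSedge f hfS) (hSedge e heS) h.symm)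
      omega
    have hfin2 : {e' ∈ G.edgeSet | v ∈ e' ∧ t e < t e'}.Finite := Set.toFinite _
    have hcard := Set.ncard_le_ncard hsub hfin2
    rw [Set.ncard_coe_finset, Finset.card_erase_of_mem heA] at hcard
    omega
  obtain ⟨M, hMS, hMm, hbound⟩ :=
    StmtAux.main_bound (α + 1) S.card S le_rfl hSnd hdeg
  have hMnum : M.card ≤ matchNum G := by
    have hmem : M.card ∈ {n : ℕ | ∃ Mset : Set (Sym2 V), Mset ⊆ G.edgeSet ∧
        (Mset.Pairwise fun e f => ∀ v : V, v ∈ e → v ∉ f) ∧ Mset.ncard = n} := by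
      refine ⟨↑M, ?_, ?_, Set.ncard_coe_finset M⟩
      · intro e he
        exact hSedge e (hMS (Finset.mem_coe.1 he))
      · intro e he f hf hef v hv
        exact hMm.2 e (Finset.mem_coe.1 he) f (Finset.mem_coe.1 hf) hef v hv
    have hbdd : BddAbove {n : ℕ | ∃ Mset : Set (Sym2 V), Mset ⊆ G.edgeSet ∧
        (Mset.Pairwise fun e f => ∀ v : V, v ∈ e → v ∉ f) ∧ Mset.ncard = n} := by
      refine ⟨(Set.univ : Set (Sym2 V)).ncard, ?_⟩
      rintro n ⟨Mset, hsub, _, rfl⟩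
      exact Set.ncard_le_ncard (Set.subset_univ _) Set.finite_univ
    exact le_csSup hbdd hmem
  have hEcard : Eset.ncard = S.card := Set.ncard_eq_toFinset_card _ hfin
  calc Eset.ncard = S.card := hEcard
    _ ≤ (α + 1 + 1) * M.card := hbound
    _ = (α + 2) * M.card := by ring_nf
    _ ≤ (α + 2) * matchNum G := Nat.mul_le_mul_left _ hMnum
end

section
/- If y : E(G) → ℝ≥0 is a fractional matching (for every vertex v, the sum of y over edges incident to v is at most 1) with y_e ≤ ε for all edges e, then Σ_e y_e ≤ (1+ε)·ν(G), where ν(G) is the maximum integral matching size. -/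
set_option linter.unusedSectionVars false
set_option linter.unusedVariables false
set_option linter.unusedTactic false
set_option maxHeartbeats 1000000

namespace FracMatchAux
open SimpleGraph
variable {V : Type*} [Fintype V] [DecidableEq V]

def IsMat (H : SimpleGraph V) (M : Set (Sym2 V)) : Prop :=
  M ⊆ H.edgeSet ∧ M.Pairwise fun e f => ∀ v : V, v ∈ e → v ∉ f

def cov (M : Set (Sym2 V)) (v : V) : Prop := ∃ e ∈ M, v ∈ e

lemma isMat_mono {H : SimpleGraph V} {M M' : Set (Sym2 V)} (h : IsMat H M) (hs : M' ⊆ M) :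
    IsMat H M' := ⟨hs.trans h.1, h.2.mono hs⟩

lemma matchNum_eq_sSup (H : SimpleGraph V) :
    matchNum H = sSup {n : ℕ | ∃ M : Set (Sym2 V), IsMat H M ∧ M.ncard = n} := by
  simp only [matchNum, IsMat, and_assoc]

lemma bddAbove_sizes (H : SimpleGraph V) :
    BddAbove {n : ℕ | ∃ M : Set (Sym2 V), IsMat H M ∧ M.ncard = n} := by
  refine ⟨Fintype.card (Sym2 V), ?_⟩
  rintro n ⟨M, hM, rfl⟩
  have := Set.ncard_le_ncard (Set.subset_univ M) Set.finite_univ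
  simpa [Set.ncard_univ, Nat.card_eq_fintype_card] using this

lemma matchNum_spec (H : SimpleGraph V) :
    ∃ M : Set (Sym2 V), IsMat H M ∧ M.ncard = matchNum H := by
  have hne : {n : ℕ | ∃ M : Set (Sym2 V), IsMat H M ∧ M.ncard = n}.Nonempty :=
    ⟨0, ∅, ⟨Set.empty_subset _, Set.pairwise_empty _⟩, Set.ncard_empty _⟩
  have := Nat.sSup_mem hne (bddAbove_sizes H)
  rw [matchNum_eq_sSup]
  obtain ⟨M, hM, hc⟩ := this
  exact ⟨M, hM, hc⟩

lemma ncard_le_matchNum {H : SimpleGraph V} {M : Set (Sym2 V)} (h : IsMat H M) :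
    M.ncard ≤ matchNum H := by
  rw [matchNum_eq_sSup]
  exact le_csSup (bddAbove_sizes H) ⟨M, h, rfl⟩

def pairFinset (e : Sym2 V) : Finset V :=
  Sym2.lift ⟨fun a b => ({a, b} : Finset V), fun a b => by ext x; simp [or_comm]⟩ e

lemma mem_pairFinset {e : Sym2 V} {v : V} : v ∈ pairFinset e ↔ v ∈ e := by
  induction e using Sym2.ind with
  | _ a b => simp [pairFinset, Sym2.mem_iff]

lemma card_pairFinset {e : Sym2 V} (h : ¬ e.IsDiag) : (pairFinset e).card = 2 := by
  induction e using Sym2.ind with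
  | _ a b =>
    have : a ≠ b := by simpa using h
    simp [pairFinset, Finset.card_insert_of_notMem, this]

lemma not_isDiag_of_isMat {H : SimpleGraph V} {M : Set (Sym2 V)} (h : IsMat H M) {e : Sym2 V}
    (he : e ∈ M) : ¬ e.IsDiag := H.not_isDiag_of_mem_edgeSet (h.1 he)

lemma covSet_eq {M : Set (Sym2 V)} :
    {v : V | cov M v} = ↑(M.toFinite.toFinset.biUnion pairFinset) := by
  ext v
  simp [cov, mem_pairFinset, Set.Finite.mem_toFinset]

lemma covSet_ncard {H : SimpleGraph V} {M : Set (Sym2 V)} (h : IsMat H M) :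
    {v : V | cov M v}.ncard = 2 * M.ncard := by
  rw [covSet_eq, Set.ncard_coe_finset]
  rw [Finset.card_biUnion]
  · rw [Finset.sum_congr rfl (fun e he => card_pairFinset
      (not_isDiag_of_isMat h (M.toFinite.mem_toFinset.1 he)))]
    simp [Finset.sum_const, mul_comm, Set.ncard_eq_toFinset_card M M.toFinite]
  · intro e he f hf hef
    have he' := M.toFinite.mem_toFinset.1 he
    have hf' := M.toFinite.mem_toFinset.1 hf
    have := h.2 he' hf' hef
    rw [Function.onFun, Finset.disjoint_left]
    intro a hae haf
    exact this a (mem_pairFinset.1 hae) (mem_pairFinset.1 haf)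

lemma missed_ncard {H : SimpleGraph V} {M : Set (Sym2 V)} (h : IsMat H M) :
    {v : V | ¬ cov M v}.ncard + 2 * M.ncard = Fintype.card V := by
  have : {v : V | ¬ cov M v} = {v : V | cov M v}ᶜ := by ext v; simp
  rw [this, ← covSet_ncard h]
  rw [add_comm]
  have := Set.ncard_add_ncard_compl {v : V | cov M v}
  simpa [Nat.card_eq_fintype_card] using this

lemma augment {H : SimpleGraph V} {M : Set (Sym2 V)} (h : IsMat H M) {e : Sym2 V}
    (he : e ∈ H.edgeSet) (hmiss : ∀ v ∈ e, ¬ cov M v) : M.ncard + 1 ≤ matchNum H := by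
  have heM : e ∉ M := by
    intro hcon
    obtain ⟨a, b⟩ := e
    exact hmiss a (Sym2.mem_mk_left a b) ⟨_, hcon, Sym2.mem_mk_left a b⟩
  have hI : IsMat H (insert e M) := by
    constructor
    · exact Set.insert_subset he h.1
    · rw [Set.pairwise_insert]
      refine ⟨h.2, fun f hf hef => ⟨?_, ?_⟩⟩
      · intro v hv hvf
        exact hmiss v hv ⟨f, hf, hvf⟩
      · intro v hv hvf
        exact hmiss v hvf ⟨f, hf, hv⟩
  have := ncard_le_matchNum hI
  rwa [Set.ncard_insert_of_notMem heM (Set.toFinite M)] at this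


lemma claim1 {H : SimpleGraph V} {M N : Set (Sym2 V)} {t : V}
    (hM : IsMat H M) (hN : IsMat H N) (hNcard : N.ncard = matchNum H) (hNt : ¬ cov N t)
    (hopt : ∀ N' : Set (Sym2 V), IsMat H N' → N'.ncard = matchNum H → ¬ cov N' t →
      (M ∩ N').ncard ≤ (M ∩ N).ncard)
    {x : V} (hxN : ¬ cov N x) (hxt : x ≠ t) : ¬ cov M x := by
  rintro ⟨e, heM, hxe⟩
  obtain ⟨y, rfl⟩ := Sym2.mem_iff_exists.1 hxe
  have hxy : x ≠ y := by
    have := not_isDiag_of_isMat hM heM; simpa [Sym2.isDiag_iff_proj_eq] using this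
  by_cases hyN : cov N y
  case neg =>
    -- augment N with s(x,y), contradicting maximality of N
    have : N.ncard + 1 ≤ matchNum H := by
      refine augment hN (hM.1 heM) ?_
      intro v hv
      rcases Sym2.mem_iff.1 hv with rfl | rfl
      · exact hxN
      · exact hyN
    omega
  case pos =>
    obtain ⟨f, hfN, hyf⟩ := hyN
    have hxf : x ∉ f := fun hc => hxN ⟨f, hfN, hc⟩
    have htf : t ∉ f := fun hc => hNt ⟨f, hfN, hc⟩
    have hef : s(x,y) ≠ f := fun hc => hxf (hc ▸ hxe)
    have hfM : f ∉ M := by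
      intro hc
      exact (hM.2 heM hc hef) y (Sym2.mem_mk_right x y) hyf
    -- the swap  N' = insert s(x,y) (N \ {f})
    set N' : Set (Sym2 V) := insert s(x,y) (N \ {f}) with hN'def
    have heN : s(x,y) ∉ N := fun hc => hxN ⟨_, hc, hxe⟩
    have hIN' : IsMat H N' := by
      constructor
      · exact Set.insert_subset (hM.1 heM) ((Set.diff_subset).trans hN.1)
      · rw [Set.pairwise_insert]
        refine ⟨hN.2.mono Set.diff_subset, fun g hg hgne => ⟨?_, ?_⟩⟩
        · intro v hv hvg
          rcases Sym2.mem_iff.1 hv with rfl | rfl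
          · exact hxN ⟨g, hg.1, hvg⟩
          · -- v = y : y's only N-edge is f, excluded
            rcases eq_or_ne g f with rfl | hgf
            · exact hg.2 rfl
            · exact (hN.2 hg.1 hfN hgf) _ hvg hyf
        · intro v hvg hv
          rcases Sym2.mem_iff.1 hv with rfl | rfl
          · exact hxN ⟨g, hg.1, hvg⟩
          · rcases eq_or_ne g f with rfl | hgf
            · exact hg.2 rfl
            · exact (hN.2 hg.1 hfN hgf) _ hvg hyf
    have hN'card : N'.ncard = matchNum H := by
      rw [hN'def, Set.ncard_insert_of_notMem (fun hc => heN hc.1) ((N.toFinite).diff (t := {f})),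
        Set.ncard_diff_singleton_of_mem hfN]
      have hpos : 0 < N.ncard := (Set.ncard_pos (Set.toFinite N)).2 ⟨f, hfN⟩
      omega
    have hN't : ¬ cov N' t := by
      rintro ⟨g, hg, htg⟩
      rcases Set.mem_insert_iff.1 hg with rfl | hg'
      · rcases Sym2.mem_iff.1 htg with rfl | rfl
        · exact hxt rfl
        · exact hNt ⟨f, hfN, hyf⟩
      · exact hNt ⟨g, hg'.1, htg⟩
    -- intersection grows
    have hsub : insert s(x,y) (M ∩ N) ⊆ M ∩ N' := by
      rintro g (rfl | ⟨hgM, hgN⟩)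
      · exact ⟨heM, Set.mem_insert _ _⟩
      · exact ⟨hgM, Set.mem_insert_of_mem _ ⟨hgN, fun hc => hfM (hc ▸ hgM)⟩⟩
    have hgrow : (M ∩ N).ncard + 1 ≤ (M ∩ N').ncard := by
      have h1 : (insert s(x,y) (M ∩ N)).ncard = (M ∩ N).ncard + 1 :=
        Set.ncard_insert_of_notMem (fun hc => heN hc.2) ((M ∩ N).toFinite)
      rw [← h1]
      exact Set.ncard_le_ncard hsub ((M ∩ N').toFinite)
    have := hopt N' hIN' hN'card hN't
    omega


lemma gallai_aux {H : SimpleGraph V}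
    (hall : ∀ t : V, ∃ N : Set (Sym2 V), IsMat H N ∧ N.ncard = matchNum H ∧ ¬ cov N t) :
    ∀ (d : ℕ) (M : Set (Sym2 V)) (u v : V), IsMat H M → M.ncard = matchNum H →
      ¬ cov M u → ¬ cov M v → H.Reachable u v → H.dist u v ≤ d → u = v := by
  intro d
  induction d with
  | zero =>
    intro M u v _ _ _ _ hr hd
    exact hr.dist_eq_zero_iff.1 (Nat.le_zero.1 hd)
  | succ d IH =>
    intro M u v hM hMc hu hv hr hd
    by_cases hdle : H.dist u v ≤ d
    · exact IH M u v hM hMc hu hv hr hdle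
    have hdist : H.dist u v = d + 1 := le_antisymm hd (by omega)
    obtain ⟨p, hp⟩ := hr.exists_walk_length_eq_dist
    rw [hdist] at hp
    cases p with
    | nil => simp at hp
    | @cons _ t _ hadj q =>
      simp only [SimpleGraph.Walk.length_cons] at hp
      have hqlen : q.length = d := by omega
      rcases Nat.eq_zero_or_pos d with rfl | hdpos
      · -- adjacent u v : augment
        have htv : t = v := SimpleGraph.Walk.eq_of_length_eq_zero hqlen
        subst htv
        have : M.ncard + 1 ≤ matchNum H := by
          refine augment hM (H.mem_edgeSet.2 hadj) ?_
          intro w hw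
          rcases Sym2.mem_iff.1 hw with rfl | rfl
          · exact hu
          · exact hv
        omega
      · have hut : u ≠ t := hadj.ne
        have hdut : H.dist u t ≤ d := by
          have := SimpleGraph.dist_le (SimpleGraph.Walk.cons hadj SimpleGraph.Walk.nil)
          simp at this
          omega
        have hdtv : H.dist t v ≤ d := hqlen ▸ SimpleGraph.dist_le q
        -- t is covered by M
        have htM : cov M t := by
          by_contra htM
          exact hut (IH M u t hM hMc hu htM hadj.reachable hdut)
        -- choose N : max matching missing t with maximal |M ∩ N|
        set S : Set ℕ := {k | ∃ N : Set (Sym2 V), (IsMat H N ∧ N.ncard = matchNum H ∧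
          ¬ cov N t) ∧ (M ∩ N).ncard = k} with hSdef
        have hSne : S.Nonempty := by
          obtain ⟨N, h1, h2, h3⟩ := hall t
          exact ⟨_, N, ⟨h1, h2, h3⟩, rfl⟩
        have hSbdd : BddAbove S := by
          refine ⟨Fintype.card (Sym2 V), ?_⟩
          rintro k ⟨N, _, rfl⟩
          have := Set.ncard_le_ncard (Set.subset_univ (M ∩ N)) Set.finite_univ
          simpa [Set.ncard_univ, Nat.card_eq_fintype_card] using this
        obtain ⟨N, hNall, hNK⟩ := Nat.sSup_mem hSne hSbdd
        obtain ⟨hN, hNc, hNt⟩ := hNall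
        have hopt : ∀ N' : Set (Sym2 V), IsMat H N' → N'.ncard = matchNum H → ¬ cov N' t →
            (M ∩ N').ncard ≤ (M ∩ N).ncard := by
          intro N' h1 h2 h3
          rw [hNK]
          exact le_csSup hSbdd ⟨N', ⟨h1, h2, h3⟩, rfl⟩
        have hNu : cov N u := by
          by_contra hNu
          exact hut (IH N u t hN hNc hNu hNt hadj.reachable hdut)
        have hNv : cov N v := by
          by_contra hNv
          have := IH N t v hN hNc hNt hNv (hadj.reachable.symm.trans hr) hdtv
          exact hv (this ▸ htM)
        -- counting contradiction
        by_contra hne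
        set A : Set V := {w | ¬ cov M w} with hAdef
        set B : Set V := {w | ¬ cov N w} with hBdef
        have hcardA : A.ncard + 2 * M.ncard = Fintype.card V := missed_ncard hM
        have hcardB : B.ncard + 2 * N.ncard = Fintype.card V := missed_ncard hN
        have hAB : A.ncard = B.ncard := by rw [hMc] at hcardA; rw [hNc] at hcardB; omega
        have hBsub : B ⊆ insert t (A \ {u, v}) := by
          intro x hx
          rcases eq_or_ne x t with rfl | hxt
          · exact Set.mem_insert _ _
          · have hxA : ¬ cov M x := claim1 hM hN hNc hNt hopt hx hxt
            refine Set.mem_insert_of_mem _ ⟨hxA, ?_⟩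
            intro hc
            rcases hc with rfl | rfl
            · exact hx hNu
            · exact hx hNv
        have huvA : ({u, v} : Set V) ⊆ A := by
          rintro x (rfl | rfl)
          · exact hu
          · exact hv
        have hA2 : 2 ≤ A.ncard := by
          have := Set.ncard_le_ncard huvA (Set.toFinite A)
          rwa [Set.ncard_pair hne] at this
        have hdiff : (A \ {u, v}).ncard = A.ncard - 2 := by
          rw [Set.ncard_diff huvA (Set.toFinite _), Set.ncard_pair hne]
        have hle : B.ncard ≤ (A \ {u, v}).ncard + 1 := by
          have h1 := Set.ncard_le_ncard hBsub (Set.toFinite _)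
          have h2 := Set.ncard_insert_le t (A \ {u, v})
          omega
        omega

lemma gallai {H : SimpleGraph V}
    (hall : ∀ t : V, ∃ N : Set (Sym2 V), IsMat H N ∧ N.ncard = matchNum H ∧ ¬ cov N t)
    {M : Set (Sym2 V)} (hM : IsMat H M) (hMcard : M.ncard = matchNum H)
    {u v : V} (hu : ¬ cov M u) (hv : ¬ cov M v) (hr : H.Reachable u v) : u = v :=
  gallai_aux hall (H.dist u v) M u v hM hMcard hu hv hr le_rfl


lemma arith (ε : ℝ) (hε : 0 ≤ ε) (c k : ℕ) (hck : c ≤ 2 * k + 1) (S : ℝ) (hS : 0 ≤ S)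
    (h1 : 2 * S ≤ (c : ℝ)) (h2 : S ≤ ε * ((c : ℝ) * ((c : ℝ) - 1) / 2)) :
    S ≤ (1 + ε) * (k : ℝ) := by
  have hc : (c : ℝ) ≤ 2 * k + 1 := by exact_mod_cast hck
  have hk : (0 : ℝ) ≤ k := Nat.cast_nonneg k
  rcases le_or_gt 1 (2 * ε * k) with hbig | hsmall
  · nlinarith
  · rcases Nat.eq_zero_or_pos c with rfl | hcpos
    · simpa using le_trans h2 (by nlinarith)
    · have hc1 : (1 : ℝ) ≤ c := by exact_mod_cast hcpos
      have e1 : (c : ℝ) - 1 ≤ 2 * k := by linarith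
      have e2 : (c : ℝ) * ((c : ℝ) - 1) ≤ (2 * k + 1) * (2 * k) := by
        apply mul_le_mul hc e1 (by linarith) (by linarith)
      have e3 : ε * ((c : ℝ) * ((c : ℝ) - 1) / 2) ≤ ε * ((2 * k + 1) * (2 * k) / 2) := by
        apply mul_le_mul_of_nonneg_left (by linarith) hε
      have e4 : 2 * ε * k * k ≤ 1 * k := mul_le_mul_of_nonneg_right (le_of_lt hsmall) hk
      nlinarith

lemma pairFinset_inj {e f : Sym2 V} (he : ¬ e.IsDiag) (hf : ¬ f.IsDiag)
    (h : pairFinset e = pairFinset f) : e = f := by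
  induction e using Sym2.ind with
  | _ a b =>
    induction f using Sym2.ind with
    | _ c d =>
      have hab : a ≠ b := by simpa using he
      have hpe : pairFinset s(a, b) = {a, b} := rfl
      have hpf : pairFinset s(c, d) = {c, d} := rfl
      rw [hpe, hpf] at h
      have ha : a ∈ ({c, d} : Finset V) := by rw [← h]; simp
      have hb : b ∈ ({c, d} : Finset V) := by rw [← h]; simp
      have hc : c ∈ ({a, b} : Finset V) := by rw [h]; simp
      simp only [Finset.mem_insert, Finset.mem_singleton] at ha hb hc
      rw [Sym2.eq_iff]
      rcases ha with rfl | rfl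
      · rcases hb with rfl | rfl
        · exact absurd rfl hab
        · exact Or.inl ⟨rfl, rfl⟩
      · rcases hb with rfl | rfl
        · exact Or.inr ⟨rfl, rfl⟩
        · rcases hc with rfl | rfl
          · exact Or.inl ⟨rfl, rfl⟩
          · exact absurd rfl hab

lemma case2 (G : SimpleGraph V) [DecidableRel G.Adj] (ε : ℝ) (hε : 0 ≤ ε) (y : Sym2 V → ℝ)
    (hy0 : ∀ e, 0 ≤ y e)
    (hdeg : ∀ v : V, ∑ e ∈ G.incidenceFinset v, y e ≤ 1)
    (hε' : ∀ e ∈ G.edgeSet, y e ≤ ε)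
    {H : SimpleGraph V} (hHG : H ≤ G)
    (hall : ∀ t : V, ∃ N : Set (Sym2 V), IsMat H N ∧ N.ncard = matchNum H ∧ ¬ cov N t) :
    ∑ e ∈ H.edgeSet.toFinite.toFinset, y e ≤ (1 + ε) * (matchNum H : ℝ) := by
  classical
  obtain ⟨M, hM, hMc⟩ := matchNum_spec H
  letI : Fintype H.ConnectedComponent := Fintype.ofFinite _
  set comp : Sym2 V → H.ConnectedComponent :=
    fun e => H.connectedComponentMk (Quot.out e).1 with hcompdef
  have hcompmem : ∀ e ∈ H.edgeSet, ∀ v ∈ e, H.connectedComponentMk v = comp e := by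
    intro e he v hv
    have heq2 : s((Quot.out e).1, (Quot.out e).2) = e := Quot.out_eq e
    rw [← heq2] at he hv
    have hadj : H.Adj _ _ := H.mem_edgeSet.1 he
    rcases Sym2.mem_iff.1 hv with rfl | rfl
    · rfl
    · exact (SimpleGraph.ConnectedComponent.connectedComponentMk_eq_of_adj hadj).symm
  set F := H.edgeSet.toFinite.toFinset with hFdef
  set Mf := M.toFinite.toFinset with hMfdef
  have hMfcard : Mf.card = matchNum H := by
    rw [← hMc, Set.ncard_eq_toFinset_card M M.toFinite]
  have hMfmem : ∀ e, e ∈ Mf ↔ e ∈ M := fun e => M.toFinite.mem_toFinset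
  have hFmem : ∀ e, e ∈ F ↔ e ∈ H.edgeSet := fun e => H.edgeSet.toFinite.mem_toFinset
  -- per-component bound
  have hcompb : ∀ c : H.ConnectedComponent,
      ∑ e ∈ F.filter (fun e => comp e = c), y e ≤
        (1 + ε) * ((Mf.filter (fun e => comp e = c)).card : ℝ) := by
    intro c
    set Fc := F.filter (fun e => comp e = c) with hFcdef
    set kc := (Mf.filter (fun e => comp e = c)).card with hkcdef
    set Cf := (c.supp).toFinite.toFinset with hCfdef
    have hCfmem : ∀ v, v ∈ Cf ↔ H.connectedComponentMk v = c := by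
      intro v
      rw [Set.Finite.mem_toFinset]
      exact SimpleGraph.ConnectedComponent.mem_supp_iff _ _
    have hFcE : ∀ e ∈ Fc, e ∈ H.edgeSet ∧ comp e = c := by
      intro e he
      rw [hFcdef, Finset.mem_filter, hFmem e] at he
      exact he
    have hepts : ∀ e ∈ Fc, ∀ v ∈ e, v ∈ Cf := by
      intro e he v hv
      obtain ⟨he1, he2⟩ := hFcE e he
      rw [hCfmem, hcompmem e he1 v hv, he2]
    -- (1) Cf.card ≤ 2 * kc + 1
    have h1 : Cf.card ≤ 2 * kc + 1 := by
      set Mc : Set (Sym2 V) := ↑(Mf.filter (fun e => comp e = c)) with hMcdef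
      have hMcsub : Mc ⊆ M := by
        intro e he
        rw [hMcdef, Finset.coe_filter, Set.mem_setOf_eq, hMfmem e] at he
        exact he.1
      have hMcIs : IsMat H Mc := isMat_mono hM hMcsub
      have hMcn : Mc.ncard = kc := by rw [hMcdef, Set.ncard_coe_finset]
      have hcov : {v : V | cov Mc v}.ncard = 2 * kc := by rw [covSet_ncard hMcIs, hMcn]
      have hmisssub : {v : V | v ∈ c.supp ∧ ¬ cov M v}.Subsingleton := by
        intro a ha b hb
        refine gallai hall hM hMc ha.2 hb.2 ?_
        exact SimpleGraph.ConnectedComponent.exact (ha.1.trans hb.1.symm)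
      have hmiss : {v : V | v ∈ c.supp ∧ ¬ cov M v}.ncard ≤ 1 :=
        (Set.ncard_le_one_iff (Set.toFinite _)).2 (fun ha hb => hmisssub ha hb)
      have hsub : (↑Cf : Set V) ⊆ {v : V | cov Mc v} ∪ {v : V | v ∈ c.supp ∧ ¬ cov M v} := by
        intro v hv
        have hvc : H.connectedComponentMk v = c := (hCfmem v).1 hv
        by_cases hcm : cov M v
        · obtain ⟨e, heM, hve⟩ := hcm
          have hec : comp e = c := by rw [← hcompmem e (hM.1 heM) v hve, hvc]
          refine Or.inl ⟨e, ?_, hve⟩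
          rw [hMcdef, Finset.coe_filter, Set.mem_setOf_eq, hMfmem e]
          exact ⟨heM, hec⟩
        · exact Or.inr ⟨hvc, hcm⟩
      have := Set.ncard_le_ncard hsub (Set.toFinite _)
      have hun := Set.ncard_union_le {v : V | cov Mc v} {v : V | v ∈ c.supp ∧ ¬ cov M v}
      rw [Set.ncard_coe_finset] at this
      omega
    -- (2) 2 * sum ≤ Cf.card
    have h2 : 2 * ∑ e ∈ Fc, y e ≤ (Cf.card : ℝ) := by
      have hswap : ∑ v ∈ Cf, ∑ e ∈ Fc, (if v ∈ e then y e else 0) =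
          ∑ e ∈ Fc, ∑ v ∈ Cf, (if v ∈ e then y e else 0) := Finset.sum_comm
      have hinner : ∀ e ∈ Fc, ∑ v ∈ Cf, (if v ∈ e then y e else 0) = 2 * y e := by
        intro e he
        rw [← Finset.sum_filter]
        have hfil : Cf.filter (fun v => v ∈ e) = pairFinset e := by
          ext v
          simp only [Finset.mem_filter, mem_pairFinset]
          exact ⟨fun h => h.2, fun h => ⟨hepts e he v h, h⟩⟩
        rw [hfil, Finset.sum_const, card_pairFinset
          (H.not_isDiag_of_mem_edgeSet (hFcE e he).1)]
        push_cast
        ring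
      have houter : ∀ v ∈ Cf, ∑ e ∈ Fc, (if v ∈ e then y e else 0) ≤ 1 := by
        intro v _
        rw [← Finset.sum_filter]
        refine le_trans (Finset.sum_le_sum_of_subset_of_nonneg ?_ (fun e _ _ => hy0 e))
          (hdeg v)
        intro e hemem
        rw [Finset.mem_filter] at hemem
        rw [SimpleGraph.mem_incidenceFinset]
        exact ⟨(SimpleGraph.edgeSet_mono hHG) (hFcE e hemem.1).1, hemem.2⟩
      calc 2 * ∑ e ∈ Fc, y e = ∑ e ∈ Fc, 2 * y e := by rw [Finset.mul_sum]
        _ = ∑ e ∈ Fc, ∑ v ∈ Cf, (if v ∈ e then y e else 0) :=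
            (Finset.sum_congr rfl hinner).symm
        _ = ∑ v ∈ Cf, ∑ e ∈ Fc, (if v ∈ e then y e else 0) := Finset.sum_comm
        _ ≤ ∑ v ∈ Cf, 1 := Finset.sum_le_sum houter
        _ = (Cf.card : ℝ) := by simp
    -- (3) sum ≤ ε · #edges, #edges ≤ choose (Cf.card) 2
    have h3 : ∑ e ∈ Fc, y e ≤ ε * ((Cf.card : ℝ) * ((Cf.card : ℝ) - 1) / 2) := by
      have hcard : Fc.card ≤ Cf.card.choose 2 := by
        rw [← Finset.card_powersetCard 2 Cf]
        refine Finset.card_le_card_of_injOn pairFinset ?_ ?_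
        · intro e he
          rw [Finset.mem_coe, Finset.mem_powersetCard]
          constructor
          · intro v hv
            exact hepts e he v (mem_pairFinset.1 hv)
          · exact card_pairFinset (H.not_isDiag_of_mem_edgeSet (hFcE e he).1)
        · intro e he f hf hef
          exact pairFinset_inj (H.not_isDiag_of_mem_edgeSet (hFcE e (by simpa using he)).1)
            (H.not_isDiag_of_mem_edgeSet (hFcE f (by simpa using hf)).1) hef
      calc ∑ e ∈ Fc, y e ≤ ∑ e ∈ Fc, ε := Finset.sum_le_sum
            (fun e he => hε' e ((SimpleGraph.edgeSet_mono hHG) (hFcE e he).1))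
        _ = (Fc.card : ℝ) * ε := by rw [Finset.sum_const]; push_cast; ring
        _ ≤ (Cf.card.choose 2 : ℝ) * ε := by
            apply mul_le_mul_of_nonneg_right _ hε
            exact_mod_cast hcard
        _ = ε * ((Cf.card : ℝ) * ((Cf.card : ℝ) - 1) / 2) := by
            rw [Nat.cast_choose_two]; ring
    exact arith ε hε Cf.card kc h1 _ (Finset.sum_nonneg fun e _ => hy0 e) h2 h3
  -- sum over components
  calc ∑ e ∈ F, y e = ∑ c : H.ConnectedComponent, ∑ e ∈ F.filter (fun e => comp e = c), y e :=
        (Finset.sum_fiberwise F comp y).symm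
    _ ≤ ∑ c : H.ConnectedComponent, (1 + ε) * ((Mf.filter (fun e => comp e = c)).card : ℝ) :=
        Finset.sum_le_sum (fun c _ => hcompb c)
    _ = (1 + ε) * ∑ c : H.ConnectedComponent, ((Mf.filter (fun e => comp e = c)).card : ℝ) := by
        rw [Finset.mul_sum]
    _ = (1 + ε) * (matchNum H : ℝ) := by
        rw [← Nat.cast_sum]
        congr 1
        rw [← Finset.card_eq_sum_card_fiberwise (fun e _ => Finset.mem_univ (comp e)), hMfcard]


/-- The graph `H` with vertex `t` isolated. -/
def delV (H : SimpleGraph V) (t : V) : SimpleGraph V where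
  Adj a b := H.Adj a b ∧ a ≠ t ∧ b ≠ t
  symm := ⟨fun a b h => ⟨h.1.symm, h.2.2, h.2.1⟩⟩
  loopless := ⟨fun a h => H.loopless.irrefl a h.1⟩

lemma delV_le (H : SimpleGraph V) (t : V) : delV H t ≤ H := fun _ _ h => h.1

lemma delV_edgeSet (H : SimpleGraph V) (t : V) :
    (delV H t).edgeSet = {e ∈ H.edgeSet | t ∉ e} := by
  ext e
  induction e using Sym2.ind with
  | _ a b =>
    simp only [SimpleGraph.mem_edgeSet, Set.mem_setOf_eq, Sym2.mem_iff, delV]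
    constructor
    · rintro ⟨h1, h2, h3⟩
      exact ⟨h1, by rintro (rfl | rfl) <;> simp_all⟩
    · rintro ⟨h1, h2⟩
      push_neg at h2
      exact ⟨h1, Ne.symm h2.1, Ne.symm h2.2⟩

lemma key (G : SimpleGraph V) [DecidableRel G.Adj] (ε : ℝ) (hε : 0 ≤ ε) (y : Sym2 V → ℝ)
    (hy0 : ∀ e, 0 ≤ y e)
    (hdeg : ∀ v : V, ∑ e ∈ G.incidenceFinset v, y e ≤ 1)
    (hε' : ∀ e ∈ G.edgeSet, y e ≤ ε) :
    ∀ (n : ℕ) (H : SimpleGraph V), H ≤ G → H.edgeSet.ncard ≤ n →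
      ∑ e ∈ H.edgeSet.toFinite.toFinset, y e ≤ (1 + ε) * (matchNum H : ℝ) := by
  intro n
  induction n with
  | zero =>
    intro H hHG hn
    have hE : H.edgeSet = ∅ := by
      have := Nat.le_zero.1 hn
      rwa [Set.ncard_eq_zero (H.edgeSet.toFinite)] at this
    have : H.edgeSet.toFinite.toFinset = ∅ := by
      simp [Set.Finite.toFinset_eq_empty, hE]
    rw [this]
    simp only [Finset.sum_empty]
    positivity
  | succ n IH =>
    intro H hHG hn
    classical
    by_cases hall : ∀ t : V, ∃ N : Set (Sym2 V), IsMat H N ∧ N.ncard = matchNum H ∧ ¬ cov N t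
    · exact case2 G ε hε y hy0 hdeg hε' hHG hall
    · push_neg at hall
      obtain ⟨t, ht⟩ := hall
      obtain ⟨M, hM, hMc⟩ := matchNum_spec H
      obtain ⟨et, hetM, htet⟩ : cov M t := ht M hM hMc
      set H' := delV H t with hH'def
      -- H' has strictly fewer edges
      have hss : H'.edgeSet ⊂ H.edgeSet := by
        rw [delV_edgeSet]
        constructor
        · exact Set.sep_subset _ _
        · intro hsub
          have := hsub (hM.1 hetM)
          exact this.2 htet
      have hn' : H'.edgeSet.ncard ≤ n := by
        have := Set.ncard_lt_ncard hss (H.edgeSet.toFinite)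
        omega
      have hIH := IH H' ((delV_le H t).trans hHG) hn'
      -- matchNum H' + 1 ≤ matchNum H
      have hnum : matchNum H' + 1 ≤ matchNum H := by
        obtain ⟨M', hM', hM'c⟩ := matchNum_spec H'
        have hM'H : IsMat H M' := ⟨hM'.1.trans (by rw [delV_edgeSet]; exact Set.sep_subset _ _),
          hM'.2⟩
        have hM't : ¬ cov M' t := by
          rintro ⟨e, heM', hte⟩
          have := hM'.1 heM'
          rw [delV_edgeSet] at this
          exact this.2 hte
        have hne : M'.ncard ≠ matchNum H := fun hc => hM't (ht M' hM'H hc)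
        have hle := ncard_le_matchNum hM'H
        omega
      -- split the sum
      have hsplit : ∑ e ∈ H.edgeSet.toFinite.toFinset, y e =
          ∑ e ∈ H'.edgeSet.toFinite.toFinset, y e +
          ∑ e ∈ (H.edgeSet.toFinite.toFinset).filter (fun e => t ∈ e), y e := by
        rw [← Finset.sum_filter_add_sum_filter_not (H.edgeSet.toFinite.toFinset)
          (fun e => t ∈ e) y, add_comm]
        congr 1
        apply Finset.sum_congr _ (fun _ _ => rfl)
        ext e
        simp only [Finset.mem_filter, Set.Finite.mem_toFinset, hH'def, delV_edgeSet,
          Set.mem_setOf_eq]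
      have hinc : ∑ e ∈ (H.edgeSet.toFinite.toFinset).filter (fun e => t ∈ e), y e ≤ 1 := by
        refine le_trans (Finset.sum_le_sum_of_subset_of_nonneg ?_ (fun e _ _ => hy0 e)) (hdeg t)
        intro e he
        rw [Finset.mem_filter, Set.Finite.mem_toFinset] at he
        rw [SimpleGraph.mem_incidenceFinset]
        exact ⟨(SimpleGraph.edgeSet_mono hHG) he.1, he.2⟩
      have hcast : (matchNum H' : ℝ) ≤ (matchNum H : ℝ) - 1 := by
        have : (matchNum H' : ℝ) + 1 ≤ (matchNum H : ℝ) := by exact_mod_cast hnum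
        linarith
      have hmul : (1 + ε) * (matchNum H' : ℝ) ≤ (1 + ε) * ((matchNum H : ℝ) - 1) :=
        mul_le_mul_of_nonneg_left hcast (by linarith)
      rw [hsplit]
      have hfinal : (1 + ε) * ((matchNum H : ℝ) - 1) + 1 ≤ (1 + ε) * (matchNum H : ℝ) := by
        ring_nf
        linarith
      linarith

end FracMatchAux

/-- If `y` is a fractional matching of `G` (nonnegative edge weights, supported
on the edges, with total weight at most `1` at each vertex) in which every edge
weight is at most `ε`, then the total weight is at most `(1+ε)·ν(G)`. -/
theorem stmt_4 {V : Type*} [Fintype V] [DecidableEq V] (G : SimpleGraph V)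
    [DecidableRel G.Adj] (ε : ℝ) (hε : 0 ≤ ε) (y : Sym2 V → ℝ)
    (hy0 : ∀ e, 0 ≤ y e)
    (hsupp : ∀ e ∉ G.edgeSet, y e = 0)
    (hdeg : ∀ v : V, ∑ e ∈ G.incidenceFinset v, y e ≤ 1)
    (hε' : ∀ e ∈ G.edgeSet, y e ≤ ε) :
    ∑ e ∈ G.edgeFinset, y e ≤ (1 + ε) * (matchNum G : ℝ) := by
  have h := FracMatchAux.key G ε hε y hy0 hdeg hε' G.edgeSet.ncard G le_rfl le_rfl
  convert h using 2
  ext e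
  simp [SimpleGraph.mem_edgeFinset, Set.Finite.mem_toFinset]
end
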